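/- arXiv:2110.01359 — 5 statements merged into one kernel-verified Lean document; each statement's English description precedes it below -/
import Mathlib

section
/- Let x₁, …, xₙ be pairwise distinct points in ℝ^d and let γ > 0. Then the Gaussian radial basis function matrix M with entries M_{ij} = exp(−γ·‖xᵢ − xⱼ‖²) is positive definite; in particular M is invertible (its determinant is nonzero). -/
open MeasureTheory Real RealInnerProductSpace Matrix Filter

variable {d : ℕ}

local notation "E" d => EuclideanSpace ℝ (Fin d)

/-- pointwise product of two Gaussians -/
private lemma gauss_prod (γ : ℝ) (u v t : EuclideanSpace ℝ (Fin d)) :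
    rexp (-(2*γ) * ‖u - t‖ ^ 2) * rexp (-(2*γ) * ‖v - t‖ ^ 2)
      = rexp (-γ * ‖u - v‖ ^ 2) * rexp (-(4*γ) * ‖t - (2⁻¹:ℝ) • (u + v)‖ ^ 2) := by
  rw [← Real.exp_add, ← Real.exp_add]
  congr 1
  have hp := parallelogram_law_with_norm ℝ (u - t) (v - t)
  have h1 : u - t + (v - t) = -((2:ℝ) • (t - (2⁻¹:ℝ) • (u + v))) := by module
  have h2 : u - t - (v - t) = u - v := by abel
  rw [h1, h2, norm_neg, norm_smul] at hp
  simp only [Real.norm_ofNat, mul_pow] at hp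
  linear_combination γ * hp

/-- the Gaussian centered at a point, weight 2γ -/
private lemma gaussians_linear_independent {n : ℕ} (x : Fin n → EuclideanSpace ℝ (Fin d))
    (hx : Function.Injective x) (γ : ℝ) (hγ : 0 < γ) (c : Fin n → ℝ)
    (h : ∀ t : EuclideanSpace ℝ (Fin d), ∑ i, c i * rexp (-(2*γ) * ‖x i - t‖ ^ 2) = 0) :
    ∀ i, c i = 0 := by
  -- characters t ↦ exp (4γ ⟪x i, t⟫)
  set φ : Fin n → (Multiplicative (EuclideanSpace ℝ (Fin d)) →* ℝ) := fun i =>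
    { toFun := fun t => rexp (4*γ * ⟪x i, Multiplicative.toAdd t⟫)
      map_one' := by simp
      map_mul' := by
        intro a b
        simp only [toAdd_mul, inner_add_right, mul_add, Real.exp_add] }
  have hφinj : Function.Injective φ := by
    intro i j hij
    have := DFunLike.congr_fun hij (Multiplicative.ofAdd (x i - x j))
    simp only [φ, MonoidHom.coe_mk, OneHom.coe_mk, toAdd_ofAdd] at this
    have h4 : 4*γ * ⟪x i, x i - x j⟫ = 4*γ * ⟪x j, x i - x j⟫ := Real.exp_injective this
    have h5 : ⟪x i - x j, x i - x j⟫ = 0 := by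
      have := mul_left_cancel₀ (by positivity : (4*γ : ℝ) ≠ 0) h4
      rw [inner_sub_left]; linarith
    exact hx (by rwa [inner_self_eq_zero, sub_eq_zero] at h5)
  have li : LinearIndependent ℝ (fun i => ⇑(φ i)) :=
    (linearIndependent_monoidHom (Multiplicative (EuclideanSpace ℝ (Fin d))) ℝ).comp φ hφinj
  have hsum : ∑ i, (c i * rexp (-(2*γ) * ‖x i‖ ^ 2)) • ⇑(φ i) = 0 := by
    funext t
    have ht := h (Multiplicative.toAdd t)
    have expand : ∀ i, c i * rexp (-(2*γ) * ‖x i - Multiplicative.toAdd t‖ ^ 2)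
        = ((c i * rexp (-(2*γ) * ‖x i‖ ^ 2)) * rexp (4*γ * ⟪x i, Multiplicative.toAdd t⟫))
          * rexp (-(2*γ) * ‖Multiplicative.toAdd t‖ ^ 2) := by
      intro i
      rw [mul_assoc, mul_assoc, ← Real.exp_add, ← Real.exp_add]
      congr 2
      rw [norm_sub_sq_real]
      ring
    simp only [expand, ← Finset.sum_mul] at ht
    have hexp : rexp (-(2*γ) * ‖Multiplicative.toAdd t‖ ^ 2) ≠ 0 := Real.exp_ne_zero _
    have := (mul_eq_zero.mp ht).resolve_right hexp
    simpa [φ, Finset.sum_apply, Pi.smul_apply, smul_eq_mul] using this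
  intro i
  have h0 := Fintype.linearIndependent_iff.mp li _ (by simpa using hsum) i
  simpa [mul_eq_zero, Real.exp_ne_zero] using h0

private lemma integrable_gaussian (b : ℝ) (hb : 0 < b) :
    Integrable (fun t : EuclideanSpace ℝ (Fin d) => rexp (-b * ‖t‖ ^ 2)) := by
  have h := (GaussianFourier.integrable_cexp_neg_mul_sq_norm_add (V := EuclideanSpace ℝ (Fin d))
    (b := (b : ℂ)) (by simpa using hb) 0 0).re
  refine h.congr (Eventually.of_forall fun t => ?_)
  simp only [RCLike.re_to_complex]
  rw [show (-(b:ℂ) * ‖t‖ ^ 2 + 0 * _) = ((-b * ‖t‖ ^ 2 : ℝ) : ℂ) by push_cast; ring]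
  rw [Complex.exp_ofReal_re]

set_option maxHeartbeats 1000000 in
/-- the Gaussian RBF matrix `M i j = exp (−γ ‖xᵢ − xⱼ‖²)` built from
pairwise distinct points is positive definite; in particular its determinant is nonzero. -/
theorem gaussianRBF_posDef {n d : ℕ} (x : Fin n → EuclideanSpace ℝ (Fin d))
    (hx : Function.Injective x) (γ : ℝ) (hγ : 0 < γ) :
    (Matrix.of fun i j : Fin n => Real.exp (-γ * ‖x i - x j‖ ^ 2)).PosDef ∧
      (Matrix.of fun i j : Fin n => Real.exp (-γ * ‖x i - x j‖ ^ 2)).det ≠ 0 := by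
  set M : Matrix (Fin n) (Fin n) ℝ :=
    Matrix.of fun i j : Fin n => Real.exp (-γ * ‖x i - x j‖ ^ 2) with hM
  -- the individual Gaussians
  set g : Fin n → EuclideanSpace ℝ (Fin d) → ℝ :=
    fun i t => rexp (-(2*γ) * ‖x i - t‖ ^ 2) with hg
  set C : ℝ := ∫ t : EuclideanSpace ℝ (Fin d), rexp (-(4*γ) * ‖t‖ ^ 2) with hC
  have hint : Integrable (fun t : EuclideanSpace ℝ (Fin d) => rexp (-(4*γ) * ‖t‖ ^ 2)) :=
    integrable_gaussian _ (by positivity)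
  have hCpos : 0 < C := by
    rw [hC, GaussianFourier.integral_rexp_neg_mul_sq_norm (by positivity)]
    positivity
  -- the key integral identity
  have key : ∀ i j, ∫ t : EuclideanSpace ℝ (Fin d), g i t * g j t = M i j * C := by
    intro i j
    simp only [hg]
    calc ∫ t : EuclideanSpace ℝ (Fin d), rexp (-(2*γ) * ‖x i - t‖^2) * rexp (-(2*γ) * ‖x j - t‖^2)
        = ∫ t : EuclideanSpace ℝ (Fin d),
            rexp (-γ * ‖x i - x j‖^2) * rexp (-(4*γ) * ‖t - (2⁻¹:ℝ) • (x i + x j)‖^2) := by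
          congr 1; funext t; exact gauss_prod γ (x i) (x j) t
      _ = rexp (-γ * ‖x i - x j‖^2) *
            ∫ t : EuclideanSpace ℝ (Fin d), rexp (-(4*γ) * ‖t - (2⁻¹:ℝ) • (x i + x j)‖^2) :=
          integral_const_mul _ _
      _ = M i j * C := by
          rw [integral_sub_right_eq_self
            (fun t : EuclideanSpace ℝ (Fin d) => rexp (-(4*γ) * ‖t‖^2)) ((2⁻¹:ℝ) • (x i + x j))]
          rfl
  have hgij : ∀ i j : Fin n, Integrable (fun t : EuclideanSpace ℝ (Fin d) => g i t * g j t) := by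
    intro i j
    have : (fun t : EuclideanSpace ℝ (Fin d) => g i t * g j t)
        = fun t => rexp (-γ * ‖x i - x j‖^2) *
            rexp (-(4*γ) * ‖t - (2⁻¹:ℝ) • (x i + x j)‖^2) := by
      funext t; exact gauss_prod γ (x i) (x j) t
    rw [this]
    exact (hint.comp_sub_right _).const_mul _
  -- the quadratic form is positive
  have hquad : ∀ c : Fin n → ℝ, c ≠ 0 → 0 < c ⬝ᵥ (M *ᵥ c) := by
    intro c hc
    set F : EuclideanSpace ℝ (Fin d) → ℝ := fun t => ∑ i, c i * g i t with hF
    have hF2 : ∀ t, F t ^ 2 = ∑ i, ∑ j, (c i * c j) * (g i t * g j t) := by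
      intro t
      rw [hF, sq, Finset.sum_mul_sum]
      exact Finset.sum_congr rfl fun i _ => Finset.sum_congr rfl fun j _ => by ring
    have hF2int : Integrable (fun t => F t ^ 2) := by
      simp only [hF2]
      exact integrable_finset_sum _ fun i _ =>
        integrable_finset_sum _ fun j _ => (hgij i j).const_mul _
    have hquadeq : ∫ t, F t ^ 2 = (c ⬝ᵥ (M *ᵥ c)) * C := by
      simp only [hF2]
      rw [integral_finset_sum _ fun i _ =>
        integrable_finset_sum _ fun j _ => (hgij i j).const_mul _]
      have : ∀ i ∈ Finset.univ, ∫ t, ∑ j, (c i * c j) * (g i t * g j t)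
          = ∑ j, (c i * c j) * (M i j * C) := by
        intro i _
        rw [integral_finset_sum _ fun j _ => (hgij i j).const_mul _]
        exact Finset.sum_congr rfl fun j _ => by rw [integral_const_mul, key i j]
      rw [Finset.sum_congr rfl this]
      simp only [dotProduct, Matrix.mulVec, Finset.sum_mul, Finset.mul_sum]
      apply Finset.sum_congr rfl; intro i _
      apply Finset.sum_congr rfl; intro j _
      ring
    have hFcont : Continuous F := by
      apply continuous_finset_sum
      intro i _
      fun_prop
    have hFne : ∃ t, F t ≠ 0 := by
      by_contra hall
      push_neg at hall
      have : ∀ i, c i = 0 := gaussians_linear_independent x hx γ hγ c hall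
      exact hc (funext this)
    have hpos : 0 < ∫ t, F t ^ 2 := by
      rw [integral_pos_iff_support_of_nonneg (fun t => sq_nonneg (F t)) hF2int]
      obtain ⟨t₀, ht₀⟩ := hFne
      have hopen : IsOpen (Function.support fun t => F t ^ 2) := by
        have : Continuous fun t => F t ^ 2 := hFcont.pow 2
        exact isOpen_ne.preimage this
      refine hopen.measure_pos volume ⟨t₀, ?_⟩
      simp [Function.mem_support, pow_eq_zero_iff, ht₀]
    rw [hquadeq] at hpos
    nlinarith [hpos, hCpos]
  have hherm : M.IsHermitian := by
    ext i j
    simp only [Matrix.conjTranspose_apply, hM, Matrix.of_apply, star_trivial, norm_sub_rev]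
  have hpd : M.PosDef := posDef_iff_dotProduct_mulVec.mpr ⟨hherm, fun c hc => by simpa [star_trivial] using hquad c hc⟩
  exact ⟨hpd, hpd.det_pos.ne'⟩
end

section
/- Let x₁, …, xₙ be pairwise distinct points in ℝ^d, let γ > 0, and let y₁, …, yₙ be arbitrary real labels. Then there exist unique weights w₁, …, wₙ ∈ ℝ such that the Gaussian radial basis function interpolant s(x) = Σᵢ wᵢ·exp(−γ·‖x − xᵢ‖²) exactly matches the labels: s(xⱼ) = yⱼ for every j = 1, …, n. -/
open Function

open Function RealInnerProductSpace

-- separating vector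
lemma sep {n d : ℕ} (x : Fin n → EuclideanSpace ℝ (Fin d)) (hx : Function.Injective x) :
    ∃ v : EuclideanSpace ℝ (Fin d), Function.Injective (fun j => (inner ℝ (x j) v : ℝ)) := by
  by_contra h
  push_neg at h
  simp only [Function.not_injective_iff] at h
  have hU : (⋃ p : {p : Fin n × Fin n // p.1 ≠ p.2},
      ((innerSL ℝ (x p.1.1 - x p.1.2)).ker : Set (EuclideanSpace ℝ (Fin d)))) = Set.univ := by
    ext v
    simp only [Set.mem_iUnion, Set.mem_univ, iff_true]
    obtain ⟨j, j', hjj', hne⟩ := h v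
    refine ⟨⟨(j, j'), hne⟩, ?_⟩
    show (inner ℝ (x j - x j') v : ℝ) = 0
    rw [inner_sub_left, hjj', sub_self]
  obtain ⟨p, hp⟩ := nonempty_interior_of_iUnion_of_closed
    (fun p : {p : Fin n × Fin n // p.1 ≠ p.2} =>
      ContinuousLinearMap.isClosed_ker (innerSL ℝ (x p.1.1 - x p.1.2))) hU
  have htop := Submodule.eq_top_of_nonempty_interior'
    ((innerSL ℝ (x p.1.1 - x p.1.2)).ker) hp
  have hmem : x p.1.1 - x p.1.2 ∈ (innerSL ℝ (x p.1.1 - x p.1.2)).ker := by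
    rw [htop]; trivial
  have h0 : (inner ℝ (x p.1.1 - x p.1.2) (x p.1.1 - x p.1.2) : ℝ) = 0 := hmem
  have : x p.1.1 - x p.1.2 = 0 := inner_self_eq_zero.mp h0
  exact p.2 (hx (by rwa [sub_eq_zero] at this))


lemma key {n d : ℕ} (x : Fin n → EuclideanSpace ℝ (Fin d)) (hx : Function.Injective x)
    (γ : ℝ) (hγ : 0 < γ) (c : Fin n → ℝ)
    (hQ : ∑ j, ∑ i, c j * c i * Real.exp (-γ * ‖x j - x i‖ ^ 2) = 0) : c = 0 := by
  classical
  set b : Fin n → ℝ := fun j => c j * Real.exp (-γ * ‖x j‖ ^ 2) with hb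
  have hin : ∀ u w : EuclideanSpace ℝ (Fin d), (inner ℝ u w : ℝ) = ∑ a, u a * w a := by
    intro u w; simp [PiLp.inner_apply, mul_comm]
  -- rewrite the quadratic form
  have hexp : ∀ j i, Real.exp (-γ * ‖x j - x i‖ ^ 2)
      = Real.exp (-γ * ‖x j‖ ^ 2) * Real.exp (-γ * ‖x i‖ ^ 2)
        * Real.exp (2 * γ * (inner ℝ (x j) (x i) : ℝ)) := by
    intro j i
    rw [← Real.exp_add, ← Real.exp_add, norm_sub_sq_real]
    congr 1
    ring
  have hQ' : ∑ j, ∑ i, b j * b i * Real.exp (2 * γ * (inner ℝ (x j) (x i) : ℝ)) = 0 := by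
    rw [← hQ]
    refine Finset.sum_congr rfl fun j _ => Finset.sum_congr rfl fun i _ => ?_
    rw [hexp j i, hb]
    ring
  set P : (k : ℕ) → Finset (Fin k → Fin d) :=
    fun k => Fintype.piFinset (fun _ : Fin k => (Finset.univ : Finset (Fin d))) with hP
  set A : (k : ℕ) → (Fin k → Fin d) → ℝ :=
    fun k p => ∑ j, b j * ∏ s, x j (p s) with hA
  -- the k-th moment identity
  have hT : ∀ k : ℕ, ∑ j, ∑ i, b j * b i * (inner ℝ (x j) (x i) : ℝ) ^ k
      = ∑ p ∈ P k, (A k p) ^ 2 := by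
    intro k
    have hprod : ∀ j i : Fin n, b j * b i * (inner ℝ (x j) (x i) : ℝ) ^ k
        = ∑ p ∈ P k, (b j * ∏ s, x j (p s)) * (b i * ∏ s, x i (p s)) := by
      intro j i
      rw [hin, Finset.sum_pow', Finset.mul_sum]
      refine Finset.sum_congr rfl fun p _ => ?_
      rw [Finset.prod_mul_distrib]
      ring
    simp only [hprod]
    calc ∑ j, ∑ i, ∑ p ∈ P k, (b j * ∏ s, x j (p s)) * (b i * ∏ s, x i (p s))
        = ∑ j, ∑ p ∈ P k, ∑ i, (b j * ∏ s, x j (p s)) * (b i * ∏ s, x i (p s)) := by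
          exact Finset.sum_congr rfl fun j _ => Finset.sum_comm
      _ = ∑ p ∈ P k, ∑ j, ∑ i, (b j * ∏ s, x j (p s)) * (b i * ∏ s, x i (p s)) :=
          Finset.sum_comm
      _ = ∑ p ∈ P k, (A k p) ^ 2 := by
          refine Finset.sum_congr rfl fun p _ => ?_
          rw [sq, hA, ← Finset.sum_mul_sum]
  -- the series
  set u : ℕ → ℝ := fun k => ∑ j, ∑ i, b j * b i
      * ((2 * γ * (inner ℝ (x j) (x i) : ℝ)) ^ k / (Nat.factorial k)) with hu
  have hsum_each : ∀ j i : Fin n,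
      Summable (fun k : ℕ => b j * b i * ((2 * γ * (inner ℝ (x j) (x i) : ℝ)) ^ k / (Nat.factorial k))) :=
    fun j i => (Real.summable_pow_div_factorial _).mul_left _
  have hu_sum : Summable u := by
    rw [hu]
    exact summable_sum fun j _ => summable_sum fun i _ => hsum_each j i
  have htsum : ∑' k, u k = 0 := by
    rw [hu]
    rw [Summable.tsum_finsetSum (fun j _ => summable_sum fun i _ => hsum_each j i)]
    rw [← hQ']
    refine Finset.sum_congr rfl fun j _ => ?_
    rw [Summable.tsum_finsetSum (fun i _ => hsum_each j i)]
    refine Finset.sum_congr rfl fun i _ => ?_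
    rw [tsum_mul_left]
    congr 1
    rw [Real.exp_eq_exp_ℝ, NormedSpace.exp_eq_tsum_div]
  have hu_eq : ∀ k, u k = ((2 * γ) ^ k / (Nat.factorial k)) * ∑ p ∈ P k, (A k p) ^ 2 := by
    intro k
    rw [← hT k, hu, Finset.mul_sum]
    refine Finset.sum_congr rfl fun j _ => ?_
    rw [Finset.mul_sum]
    refine Finset.sum_congr rfl fun i _ => ?_
    rw [mul_pow]
    ring
  have hu_nonneg : ∀ k, 0 ≤ u k := by
    intro k
    rw [hu_eq k]
    exact mul_nonneg (by positivity) (Finset.sum_nonneg fun p _ => sq_nonneg _)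
  have hu_zero : ∀ k, u k = 0 := by
    intro k
    refine le_antisymm ?_ (hu_nonneg k)
    rw [← htsum]
    exact Summable.le_tsum hu_sum k fun m _ => hu_nonneg m
  have hA_zero : ∀ (k : ℕ) (p : Fin k → Fin d), p ∈ P k → A k p = 0 := by
    intro k p hp
    have h1 : ((2 * γ) ^ k / (Nat.factorial k)) * ∑ p ∈ P k, (A k p) ^ 2 = 0 := by
      rw [← hu_eq k]; exact hu_zero k
    have h2 : ∑ p ∈ P k, (A k p) ^ 2 = 0 := by
      have hpos : (0:ℝ) < (2 * γ) ^ k / (Nat.factorial k) := by positivity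
      exact (mul_eq_zero.mp h1).resolve_left (ne_of_gt hpos)
    have := (Finset.sum_eq_zero_iff_of_nonneg (fun p _ => sq_nonneg (A k p))).mp h2 p hp
    exact pow_eq_zero_iff (by norm_num) |>.mp this
  -- separating vector and Vandermonde
  obtain ⟨v, hv⟩ := sep x hx
  set t : Fin n → ℝ := fun j => (inner ℝ (x j) v : ℝ) with ht
  have hmom : ∀ k : ℕ, ∑ j, b j * (t j) ^ k = 0 := by
    intro k
    have expand : ∀ j, (t j) ^ k = ∑ p ∈ P k, (∏ s, x j (p s)) * (∏ s, v (p s)) := by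
      intro j
      rw [ht]
      simp only
      rw [hin, Finset.sum_pow']
      exact Finset.sum_congr rfl fun p _ => Finset.prod_mul_distrib
    calc ∑ j, b j * (t j) ^ k
        = ∑ j, ∑ p ∈ P k, (b j * ∏ s, x j (p s)) * (∏ s, v (p s)) := by
          refine Finset.sum_congr rfl fun j _ => ?_
          rw [expand j, Finset.mul_sum]
          exact Finset.sum_congr rfl fun p _ => by ring
      _ = ∑ p ∈ P k, (∑ j, b j * ∏ s, x j (p s)) * (∏ s, v (p s)) := by
          rw [Finset.sum_comm]
          exact Finset.sum_congr rfl fun p _ => (Finset.sum_mul ..).symm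
      _ = 0 := Finset.sum_eq_zero fun p hp => by
          rw [show (∑ j, b j * ∏ s, x j (p s)) = A k p from rfl, hA_zero _ p hp, zero_mul]
  set V : Matrix (Fin n) (Fin n) ℝ := (Matrix.vandermonde t).transpose with hV
  have hmul : V.mulVec b = 0 := by
    funext k
    have := hmom (k : ℕ)
    simp only [hV, Matrix.mulVec, dotProduct, Matrix.transpose_apply,
      Matrix.vandermonde, Matrix.of_apply, Pi.zero_apply]
    rw [← this]
    exact Finset.sum_congr rfl fun j _ => mul_comm _ _
  have hdet : IsUnit V.det := by
    rw [hV, Matrix.det_transpose]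
    refine isUnit_iff_ne_zero.mpr ?_
    rw [Ne, Matrix.det_vandermonde_eq_zero_iff]
    rintro ⟨i, j, hij, hne⟩
    exact hne (hv hij)
  have hb0 : b = 0 := by
    calc b = Matrix.mulVec 1 b := (Matrix.one_mulVec b).symm
      _ = (V⁻¹ * V).mulVec b := by rw [Matrix.nonsing_inv_mul V hdet]
      _ = V⁻¹.mulVec (V.mulVec b) := by rw [← Matrix.mulVec_mulVec]
      _ = 0 := by rw [hmul, Matrix.mulVec_zero]
  funext j
  have : b j = 0 := by rw [hb0]; rfl
  rw [hb] at this
  simp only at this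
  rcases mul_eq_zero.mp this with h | h
  · exact h
  · exact absurd h (Real.exp_ne_zero _)

/-- Gaussian RBF interpolation: for pairwise distinct centers `xᵢ`,
`γ > 0` and arbitrary labels `yⱼ`, there are unique weights `wᵢ` with
`∑ᵢ wᵢ exp (−γ ‖xⱼ − xᵢ‖²) = yⱼ` for every `j`. -/
theorem gaussianRBF_interpolation {n d : ℕ} (x : Fin n → EuclideanSpace ℝ (Fin d))
    (hx : Function.Injective x) (γ : ℝ) (hγ : 0 < γ) (y : Fin n → ℝ) :
    ∃! w : Fin n → ℝ, ∀ j : Fin n,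
      ∑ i : Fin n, w i * Real.exp (-γ * ‖x j - x i‖ ^ 2) = y j := by
  classical
  set M : Matrix (Fin n) (Fin n) ℝ :=
    Matrix.of fun j i => Real.exp (-γ * ‖x j - x i‖ ^ 2) with hM
  have happ : ∀ (w : Fin n → ℝ) (j : Fin n),
      M.mulVec w j = ∑ i, w i * Real.exp (-γ * ‖x j - x i‖ ^ 2) := by
    intro w j
    simp only [hM, Matrix.mulVec, dotProduct, Matrix.of_apply]
    exact Finset.sum_congr rfl fun i _ => mul_comm _ _
  have hker : ∀ c : Fin n → ℝ, M.mulVec c = 0 → c = 0 := by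
    intro c h0
    apply key x hx γ hγ
    have hz : ∑ j, c j * M.mulVec c j = 0 := by simp [h0]
    rw [← hz]
    refine Finset.sum_congr rfl fun j _ => ?_
    rw [happ, Finset.mul_sum]
    exact Finset.sum_congr rfl fun i _ => by ring
  have hinj : Function.Injective M.mulVecLin := by
    rw [← LinearMap.ker_eq_bot, LinearMap.ker_eq_bot']
    intro c hc
    exact hker c hc
  have hsurj : Function.Surjective M.mulVecLin :=
    LinearMap.surjective_of_injective hinj
  obtain ⟨w, hw⟩ := hsurj y
  refine ⟨w, fun j => ?_, fun w' hw' => ?_⟩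
  · rw [← happ w j]
    have : M.mulVec w = y := hw
    rw [this]
  · apply hinj
    show M.mulVec w' = M.mulVec w
    have h1 : M.mulVec w' = y := by
      funext j; rw [happ, hw' j]
    have h2 : M.mulVec w = y := hw
    rw [h1, h2]
end

section
/- Let u : ℝ² → ℝ be the mode III crack displacement u(x,y) = Im((x + iy)^{1/2}). Then for every (x,y) with x > 0 or y ≠ 0, the squared gradient norm satisfies (∂u/∂x)² + (∂u/∂y)² = 1/(4·√(x² + y²)); consequently the strain energy density (1/2)·((∂u/∂x)² + (∂u/∂y)²) equals 1/(8·√(x² + y²)) = 1/(8r). -/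
/-- The mode III crack displacement `u(x,y) = Im ((x + i y)^(1/2))`, principal branch. -/
noncomputable def crackU (x y : ℝ) : ℝ :=
  (((x : ℂ) + (y : ℂ) * Complex.I) ^ ((1 / 2 : ℂ))).im

/-- on the slit plane the squared gradient norm of the crack displacement
is `1/(4 √(x² + y²))`, hence the strain energy density `½ |∇u|²` equals `1/(8 r)`. -/
theorem crackU_energy_density (x y : ℝ) (h : 0 < x ∨ y ≠ 0) :
    (deriv (fun s : ℝ => crackU s y) x) ^ 2 + (deriv (fun s : ℝ => crackU x s) y) ^ 2
        = 1 / (4 * Real.sqrt (x ^ 2 + y ^ 2)) ∧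
    (1 / 2) * ((deriv (fun s : ℝ => crackU s y) x) ^ 2
        + (deriv (fun s : ℝ => crackU x s) y) ^ 2)
        = 1 / (8 * Real.sqrt (x ^ 2 + y ^ 2)) := by
  set z : ℂ := (x : ℂ) + (y : ℂ) * Complex.I with hz
  have hzslit : z ∈ Complex.slitPlane := by
    rw [Complex.mem_slitPlane_iff]
    simp [hz]
    exact h
  have hz0 : z ≠ 0 := Complex.slitPlane_ne_zero hzslit
  set w : ℂ := (1 / 2 : ℂ) * z ^ ((1 / 2 : ℂ) - 1) with hw
  have hf : HasDerivAt (fun t : ℂ => t ^ ((1 / 2 : ℂ))) w z :=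
    (Complex.hasStrictDerivAt_cpow_const hzslit).hasDerivAt
  -- x-direction
  have hg1 : HasDerivAt (fun s : ℝ => (s : ℂ) + (y : ℂ) * Complex.I) 1 x := by
    simpa using (Complex.ofRealCLM.hasDerivAt (x := x)).add_const ((y : ℂ) * Complex.I)
  have hF1 : HasDerivAt (fun s : ℝ => ((s : ℂ) + (y : ℂ) * Complex.I) ^ ((1 / 2 : ℂ))) (w * 1) x := by
    have : HasDerivAt ((fun t : ℂ => t ^ ((1 / 2 : ℂ))) ∘
        (fun s : ℝ => (s : ℂ) + (y : ℂ) * Complex.I)) ((1 : ℂ) • w) x :=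
      hf.scomp x hg1
    simpa [Function.comp_def, smul_eq_mul, mul_comm] using this
  have hd1 : HasDerivAt (fun s : ℝ => crackU s y) w.im x := by
    have := (Complex.imCLM.hasFDerivAt.comp_hasDerivAt x hF1)
    simpa [crackU, Function.comp_def] using this
  -- y-direction
  have hg2 : HasDerivAt (fun s : ℝ => (x : ℂ) + (s : ℂ) * Complex.I) Complex.I y := by
    simpa using ((Complex.ofRealCLM.hasDerivAt (x := y)).mul_const Complex.I).const_add (x : ℂ)
  have hF2 : HasDerivAt (fun s : ℝ => ((x : ℂ) + (s : ℂ) * Complex.I) ^ ((1 / 2 : ℂ)))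
      (w * Complex.I) y := by
    have : HasDerivAt ((fun t : ℂ => t ^ ((1 / 2 : ℂ))) ∘
        (fun s : ℝ => (x : ℂ) + (s : ℂ) * Complex.I)) (Complex.I • w) y :=
      hf.scomp y hg2
    simpa [Function.comp_def, smul_eq_mul, mul_comm] using this
  have hd2 : HasDerivAt (fun s : ℝ => crackU x s) (w * Complex.I).im y := by
    have := (Complex.imCLM.hasFDerivAt.comp_hasDerivAt y hF2)
    simpa [crackU, Function.comp_def] using this
  rw [hd1.deriv, hd2.deriv]
  have him : (w * Complex.I).im = w.re := by simp
  have key : w.im ^ 2 + (w * Complex.I).im ^ 2 = Complex.normSq w := by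
    rw [him, Complex.normSq_apply]; ring
  have habs : Complex.normSq w = 1 / (4 * Real.sqrt (x ^ 2 + y ^ 2)) := by
    rw [← Complex.sq_norm, hw, norm_mul, Complex.norm_cpow_of_ne_zero hz0]
    have hre : ((1 / 2 : ℂ) - 1).re = (-(1/2) : ℝ) := by norm_num
    have him0 : ((1 / 2 : ℂ) - 1).im = 0 := by norm_num
    have habsz : ‖z‖ = Real.sqrt (x ^ 2 + y ^ 2) := by
      rw [Complex.norm_def, Complex.normSq_apply]
      simp [hz]
      ring_nf
    have hpos : 0 < Real.sqrt (x ^ 2 + y ^ 2) := by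
      rw [← habsz]; exact norm_pos_iff.mpr hz0
    rw [hre, him0, habsz, mul_zero, Real.exp_zero, div_one]
    have h2 : ‖(1/2 : ℂ)‖ = 1/2 := by norm_num
    rw [h2, mul_pow, ← Real.rpow_natCast (Real.sqrt (x ^ 2 + y ^ 2) ^ (-(1/2):ℝ)) 2,
      ← Real.rpow_mul hpos.le]
    norm_num
    rw [Real.rpow_neg_one]
    field_simp
  rw [key, habs]
  constructor
  · rfl
  · ring
end

section
/- The exact potential energy of the mode III crack problem on the square (−1,1)×(−1,1) has the closed-form value ∫_{[−1,1]×[−1,1]} 1/(8·√(x² + y²)) dx dy = log(1 + √2) (numerically ≈ 0.8814). -/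
open MeasureTheory Real Set Filter

/-- Antiderivative for the outer integral. -/
noncomputable def crackK (x : ℝ) : ℝ := (1/4) * (x * Real.arsinh (|x|⁻¹) + Real.arsinh x)

lemma crack_sq_add_sq_pos {x : ℝ} (hx : x ≠ 0) (y : ℝ) : 0 < x ^ 2 + y ^ 2 := by
  positivity

lemma crack_sqrt_aux {x : ℝ} (hx : x ≠ 0) (y : ℝ) :
    Real.sqrt (1 + (y / |x|) ^ 2) = Real.sqrt (x ^ 2 + y ^ 2) / |x| := by
  have hx' : (0:ℝ) < |x| := abs_pos.2 hx
  rw [eq_div_iff hx'.ne', ← Real.sqrt_sq_eq_abs, ← Real.sqrt_mul (by positivity)]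
  congr 1
  have : |x| ^ 2 = x ^ 2 := sq_abs x
  field_simp
  rw [Real.sq_sqrt (sq_nonneg x)]

lemma crack_inner_deriv {x : ℝ} (hx : x ≠ 0) (y : ℝ) :
    HasDerivAt (fun y => (1/8) * Real.arsinh (y / |x|))
      (1 / (8 * Real.sqrt (x ^ 2 + y ^ 2))) y := by
  have hx' : (0:ℝ) < |x| := abs_pos.2 hx
  have hs : (0:ℝ) < Real.sqrt (x ^ 2 + y ^ 2) := Real.sqrt_pos.2 (crack_sq_add_sq_pos hx y)
  have h1 : HasDerivAt (fun y : ℝ => y / |x|) (1 / |x|) y := by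
    simpa using (hasDerivAt_id y).div_const |x|
  have h2 := (Real.hasDerivAt_arsinh (y / |x|)).comp y h1
  have h3 := h2.const_mul (1/8 : ℝ)
  refine h3.congr_deriv ?_
  rw [crack_sqrt_aux hx y]
  field_simp

lemma crack_inner_cont {x : ℝ} (hx : x ≠ 0) :
    Continuous fun y : ℝ => 1 / (8 * Real.sqrt (x ^ 2 + y ^ 2)) := by
  refine continuous_const.div ?_ fun y => ?_
  · exact continuous_const.mul (Real.continuous_sqrt.comp (by fun_prop))
  · have := Real.sqrt_pos.2 (crack_sq_add_sq_pos hx y)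
    positivity

lemma crack_inner_eq {x : ℝ} (hx : x ≠ 0) :
    ∫ y in Icc (-1:ℝ) 1, 1 / (8 * Real.sqrt (x ^ 2 + y ^ 2))
      = (1/4) * Real.arsinh (|x|⁻¹) := by
  rw [integral_Icc_eq_integral_Ioc, ← intervalIntegral.integral_of_le (by norm_num : (-1:ℝ) ≤ 1)]
  rw [intervalIntegral.integral_eq_sub_of_hasDerivAt
    (fun y _ => crack_inner_deriv hx y) ((crack_inner_cont hx).intervalIntegrable _ _)]
  have h1 : (-1 : ℝ) / |x| = -(1 / |x|) := by ring
  rw [h1, Real.arsinh_neg]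
  rw [one_div]
  ring_nf

lemma crack_base_deriv {x : ℝ} (hx : x ≠ 0) :
    HasDerivAt (fun t : ℝ => t * Real.arsinh t⁻¹)
      (Real.arsinh x⁻¹ - |x| / (x * Real.sqrt (1 + x ^ 2))) x := by
  have hx' : (0:ℝ) < |x| := abs_pos.2 hx
  have hs : (0:ℝ) < Real.sqrt (1 + x ^ 2) := Real.sqrt_pos.2 (by positivity)
  have h1 : HasDerivAt (fun t : ℝ => Real.arsinh t⁻¹)
      ((Real.sqrt (1 + (x⁻¹) ^ 2))⁻¹ * (-(x ^ 2)⁻¹)) x :=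
    (Real.hasDerivAt_arsinh _).comp x (hasDerivAt_inv hx)
  have h2 := (hasDerivAt_id x).mul h1
  refine h2.congr_deriv ?_
  have key : Real.sqrt (1 + (x⁻¹) ^ 2) = Real.sqrt (1 + x ^ 2) / |x| := by
    have := crack_sqrt_aux hx 1
    simpa [one_div, add_comm] using this
  rw [key, id_eq]
  field_simp
  ring

lemma crack_K_deriv {x : ℝ} (hx : x ≠ 0) :
    HasDerivAt crackK ((1/4) * Real.arsinh (|x|⁻¹)) x := by
  have hs : (0:ℝ) < Real.sqrt (1 + x ^ 2) := Real.sqrt_pos.2 (by positivity)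
  rcases hx.lt_or_gt with h | h
  · have habs : |x| = -x := abs_of_neg h
    have hd := ((crack_base_deriv hx).neg.add (Real.hasDerivAt_arsinh x)).const_mul (1/4 : ℝ)
    have heq : crackK =ᶠ[nhds x]
        fun t => (1/4) * (-(t * Real.arsinh t⁻¹) + Real.arsinh t) := by
      filter_upwards [Iio_mem_nhds h] with t ht
      have habt : |t| = -t := abs_of_neg ht
      rw [crackK, habt, inv_neg, Real.arsinh_neg]
      ring
    have := hd.congr_of_eventuallyEq heq
    refine this.congr_deriv ?_
    rw [habs, inv_neg, Real.arsinh_neg]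
    field_simp
    ring
  · have habs : |x| = x := abs_of_pos h
    have hd := ((crack_base_deriv hx).add (Real.hasDerivAt_arsinh x)).const_mul (1/4 : ℝ)
    have heq : crackK =ᶠ[nhds x]
        fun t => (1/4) * (t * Real.arsinh t⁻¹ + Real.arsinh t) := by
      filter_upwards [Ioi_mem_nhds h] with t ht
      rw [crackK, abs_of_pos ht]
    have := hd.congr_of_eventuallyEq heq
    refine this.congr_deriv ?_
    rw [habs]
    field_simp
    ring

lemma crack_arsinh_bound {t : ℝ} (ht : t ≠ 0) (ht1 : |t| ≤ 1) :
    Real.arsinh (|t|⁻¹) ≤ Real.log 3 - Real.log |t| := by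
  set s : ℝ := |t|⁻¹ with hs
  have htpos : (0:ℝ) < |t| := abs_pos.2 ht
  have hspos : (0:ℝ) < s := by positivity
  have hs1 : (1:ℝ) ≤ s := (one_le_inv₀ htpos).2 ht1
  have hsqrt : Real.sqrt (1 + s ^ 2) ≤ 1 + s := by
    have h1 : (1 + s ^ 2 : ℝ) ≤ (1 + s) ^ 2 := by nlinarith
    calc Real.sqrt (1 + s ^ 2) ≤ Real.sqrt ((1 + s) ^ 2) := Real.sqrt_le_sqrt h1
    _ = 1 + s := Real.sqrt_sq (by positivity)
  have h2 : s + Real.sqrt (1 + s ^ 2) ≤ 3 * s := by linarith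
  have h3 : Real.arsinh s ≤ Real.log (3 * s) := by
    rw [Real.arsinh]
    exact Real.log_le_log (by positivity) h2
  rw [Real.log_mul (by norm_num) hspos.ne'] at h3
  rw [hs, Real.log_inv] at h3
  linarith

lemma crack_tendsto_zero :
    Filter.Tendsto (fun t : ℝ => t * Real.arsinh (|t|⁻¹)) (nhds 0) (nhds 0) := by
  apply squeeze_zero_norm' (a := fun t : ℝ => |t| * Real.log 3 - |t| * Real.log |t|)
  · filter_upwards [Metric.ball_mem_nhds (0:ℝ) one_pos] with t ht
    rcases eq_or_ne t 0 with rfl | ht0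
    · simp
    · have ht1 : |t| ≤ 1 := by
        rw [Metric.mem_ball, Real.dist_eq, sub_zero] at ht
        exact ht.le
      have hnn : 0 ≤ Real.arsinh (|t|⁻¹) := Real.arsinh_nonneg_iff.2 (by positivity)
      rw [norm_mul, Real.norm_eq_abs, Real.norm_eq_abs, abs_of_nonneg hnn]
      have := crack_arsinh_bound ht0 ht1
      have h4 : |t| * Real.arsinh (|t|⁻¹) ≤ |t| * (Real.log 3 - Real.log |t|) :=
        mul_le_mul_of_nonneg_left this (abs_nonneg t)
      linarith
  · have hc : Continuous fun t : ℝ => |t| * Real.log 3 - |t| * Real.log |t| := by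
      have h1 : Continuous fun t : ℝ => |t| * Real.log |t| :=
        Real.continuous_mul_log.comp continuous_abs
      fun_prop
    have := hc.tendsto 0
    simpa using this

lemma crack_K_continuous : Continuous crackK := by
  rw [continuous_iff_continuousAt]
  intro x
  rcases eq_or_ne x 0 with rfl | hx
  · have h0 : crackK 0 = 0 := by simp [crackK]
    unfold ContinuousAt
    rw [h0]
    have : Filter.Tendsto (fun t : ℝ => (1/4 : ℝ) * (t * Real.arsinh (|t|⁻¹) + Real.arsinh t))
        (nhds 0) (nhds ((1/4 : ℝ) * (0 + 0))) := by
      apply Filter.Tendsto.const_mul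
      apply crack_tendsto_zero.add
      simpa using Real.continuous_arsinh.tendsto 0
    have e : crackK = fun t : ℝ => (1/4 : ℝ) * (t * Real.arsinh (|t|⁻¹) + Real.arsinh t) := rfl
    rw [e]
    simpa using this
  · unfold crackK
    have habs : ContinuousAt (fun t : ℝ => Real.arsinh (|t|⁻¹)) x := by
      apply ContinuousAt.arsinh
      exact (continuous_abs.continuousAt).inv₀ (abs_ne_zero.2 hx)
    exact (continuousAt_const.mul ((continuousAt_id.mul habs).add
      Real.continuous_arsinh.continuousAt))

lemma crack_g_nonneg (x : ℝ) : 0 ≤ (1/4 : ℝ) * Real.arsinh (|x|⁻¹) :=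
  mul_nonneg (by norm_num) (Real.arsinh_nonneg_iff.2 (by positivity))

lemma crack_int_pos :
    IntegrableOn (fun x : ℝ => (1/4) * Real.arsinh (|x|⁻¹)) (Ioc (0:ℝ) 1) :=
  intervalIntegral.integrableOn_deriv_of_nonneg (crack_K_continuous.continuousOn)
    (fun x hx => crack_K_deriv hx.1.ne') (fun x _ => crack_g_nonneg x)

lemma crack_int_neg :
    IntegrableOn (fun x : ℝ => (1/4) * Real.arsinh (|x|⁻¹)) (Ioc (-1:ℝ) 0) :=
  intervalIntegral.integrableOn_deriv_of_nonneg (crack_K_continuous.continuousOn)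
    (fun x hx => crack_K_deriv hx.2.ne) (fun x _ => crack_g_nonneg x)

lemma crack_val_pos :
    ∫ x in (0:ℝ)..1, (1/4) * Real.arsinh (|x|⁻¹) = (1/2) * Real.arsinh 1 := by
  rw [intervalIntegral.integral_eq_sub_of_hasDerivAt_of_le zero_le_one
    crack_K_continuous.continuousOn (fun x hx => crack_K_deriv hx.1.ne')
    ((intervalIntegrable_iff_integrableOn_Ioc_of_le zero_le_one).2 crack_int_pos)]
  simp [crackK]
  ring

lemma crack_val_neg :
    ∫ x in (-1:ℝ)..0, (1/4) * Real.arsinh (|x|⁻¹) = (1/2) * Real.arsinh 1 := by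
  rw [intervalIntegral.integral_eq_sub_of_hasDerivAt_of_le (by norm_num : (-1:ℝ) ≤ 0)
    crack_K_continuous.continuousOn (fun x hx => crack_K_deriv hx.2.ne)
    ((intervalIntegrable_iff_integrableOn_Ioc_of_le (by norm_num)).2 crack_int_neg)]
  simp [crackK, Real.arsinh_neg]
  ring

lemma crack_outer_integrable :
    IntegrableOn (fun x : ℝ => (1/4) * Real.arsinh (|x|⁻¹)) (Icc (-1:ℝ) 1) := by
  have h : IntegrableOn (fun x : ℝ => (1/4) * Real.arsinh (|x|⁻¹)) (Ioc (-1:ℝ) 1) := by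
    have := crack_int_neg.union crack_int_pos
    rwa [Set.Ioc_union_Ioc_eq_Ioc (by norm_num) (by norm_num)] at this
  rwa [integrableOn_Icc_iff_integrableOn_Ioc]

lemma crack_outer_val :
    ∫ x in Icc (-1:ℝ) 1, (1/4) * Real.arsinh (|x|⁻¹) = Real.arsinh 1 := by
  rw [integral_Icc_eq_integral_Ioc,
    ← intervalIntegral.integral_of_le (by norm_num : (-1:ℝ) ≤ 1),
    ← intervalIntegral.integral_add_adjacent_intervals (b := (0:ℝ))
      ((intervalIntegrable_iff_integrableOn_Ioc_of_le (by norm_num)).2 crack_int_neg)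
      ((intervalIntegrable_iff_integrableOn_Ioc_of_le zero_le_one).2 crack_int_pos),
    crack_val_pos, crack_val_neg]
  ring

lemma crack_ae_ne_zero :
    ∀ᵐ x : ℝ ∂(volume.restrict (Icc (-1:ℝ) 1)), x ≠ 0 := by
  apply ae_restrict_of_ae
  rw [ae_iff]
  simp only [ne_eq, not_not, Set.setOf_eq_eq_singleton]
  exact Real.volume_singleton

/-- the exact potential energy of the mode III crack on the square
`[−1,1] × [−1,1]`: `∫∫ 1/(8 √(x² + y²)) dx dy = log (1 + √2) ≈ 0.8814`. -/
theorem crack_energy_integral :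
    ∫ p : ℝ × ℝ in Set.Icc (-1 : ℝ) 1 ×ˢ Set.Icc (-1 : ℝ) 1,
        1 / (8 * Real.sqrt (p.1 ^ 2 + p.2 ^ 2))
      = Real.log (1 + Real.sqrt 2) := by
  have h0 := crack_ae_ne_zero
  have hmeas : AEStronglyMeasurable (fun p : ℝ × ℝ => 1 / (8 * Real.sqrt (p.1 ^ 2 + p.2 ^ 2)))
      ((volume.restrict (Icc (-1:ℝ) 1)).prod (volume.restrict (Icc (-1:ℝ) 1))) := by
    apply Measurable.aestronglyMeasurable
    fun_prop
  have hInt : Integrable (fun p : ℝ × ℝ => 1 / (8 * Real.sqrt (p.1 ^ 2 + p.2 ^ 2)))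
      ((volume.restrict (Icc (-1:ℝ) 1)).prod (volume.restrict (Icc (-1:ℝ) 1))) := by
    rw [integrable_prod_iff hmeas]
    constructor
    · filter_upwards [h0] with x hx
      exact (crack_inner_cont hx).integrableOn_Icc
    · apply Integrable.congr crack_outer_integrable
      filter_upwards [h0] with x hx
      have hn : (fun y : ℝ => ‖1 / (8 * Real.sqrt (x ^ 2 + y ^ 2))‖)
          = fun y : ℝ => 1 / (8 * Real.sqrt (x ^ 2 + y ^ 2)) :=
        funext fun y => Real.norm_of_nonneg (by positivity)
      show (1/4 : ℝ) * Real.arsinh (|x|⁻¹)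
        = ∫ y in Icc (-1:ℝ) 1, ‖1 / (8 * Real.sqrt (x ^ 2 + y ^ 2))‖
      rw [hn, crack_inner_eq hx]
  rw [Measure.volume_eq_prod, ← Measure.prod_restrict, integral_prod _ hInt]
  have hcongr : ∀ᵐ x : ℝ ∂(volume.restrict (Icc (-1:ℝ) 1)),
      (∫ y in Icc (-1:ℝ) 1, 1 / (8 * Real.sqrt (x ^ 2 + y ^ 2)))
        = (1/4) * Real.arsinh (|x|⁻¹) := by
    filter_upwards [h0] with x hx
    exact crack_inner_eq hx
  rw [integral_congr_ae hcongr, crack_outer_val, Real.arsinh]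
  norm_num
end

section
/- Let a < b, let u : ℝ → ℝ be twice continuously differentiable on ℝ, let f : ℝ → ℝ be continuous, and let v : ℝ → ℝ be continuously differentiable with v(a) = v(b) = 0. Define the potential energy J(w) = ∫_a^b ((1/2)·(w′(x))² − f(x)·w(x)) dx. Then the first variation of J at u in the direction v equals the weighted residual with test function v: the function t ↦ J(u + t·v) has derivative at t = 0 equal to ∫_a^b (−u″(x) − f(x))·v(x) dx. -/
/-- the first variation of the potential energy
`J(w) = ∫_a^b (½ (w')² − f w)` at `u` in a direction `v` vanishing at the endpoints
equals the weighted residual `∫_a^b (−u'' − f) v`. -/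
theorem energy_first_variation (a b : ℝ) (hab : a < b) (u v f : ℝ → ℝ)
    (hu : ContDiff ℝ 2 u) (hf : Continuous f) (hv : ContDiff ℝ 1 v)
    (hva : v a = 0) (hvb : v b = 0) :
    HasDerivAt
      (fun t : ℝ => ∫ x in a..b,
        ((1 / 2) * (deriv (fun s => u s + t * v s) x) ^ 2
          - f x * (u x + t * v x)))
      (∫ x in a..b, (-(deriv (deriv u) x) - f x) * v x) 0 := by
  have hu1 : ContDiff ℝ 1 (deriv u) := by
    exact (contDiff_succ_iff_deriv.mp (show ContDiff ℝ (1 + 1) u by exact_mod_cast hu)).2.2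
  have hcu : Continuous u := hu.continuous
  have hcv : Continuous v := hv.continuous
  have hcu' : Continuous (deriv u) := hu1.continuous
  have hcv' : Continuous (deriv v) := hv.continuous_deriv le_rfl
  have hcu'' : Continuous (deriv (deriv u)) := hu1.continuous_deriv le_rfl
  have hdu : ∀ x, HasDerivAt u (deriv u x) x :=
    fun x => ((hu.differentiable (by norm_num)) x).hasDerivAt
  have hdv : ∀ x, HasDerivAt v (deriv v x) x :=
    fun x => ((hv.differentiable one_ne_zero) x).hasDerivAt
  have hdu' : ∀ x, HasDerivAt (deriv u) (deriv (deriv u) x) x :=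
    fun x => ((hu1.differentiable one_ne_zero) x).hasDerivAt
  set A := ∫ x in a..b, ((1 / 2) * (deriv u x) ^ 2 - f x * u x) with hA
  set B := ∫ x in a..b, (deriv u x * deriv v x - f x * v x) with hB
  set C := ∫ x in a..b, ((1 / 2) * (deriv v x) ^ 2) with hC
  have ip : IntervalIntegrable (fun x => (1 / 2) * (deriv u x) ^ 2 - f x * u x) MeasureTheory.volume a b :=
    ((continuous_const.mul (hcu'.pow 2)).sub (hf.mul hcu)).intervalIntegrable a b
  have iq : IntervalIntegrable (fun x => deriv u x * deriv v x - f x * v x) MeasureTheory.volume a b :=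
    ((hcu'.mul hcv').sub (hf.mul hcv)).intervalIntegrable a b
  have ir : IntervalIntegrable (fun x => (1 / 2) * (deriv v x) ^ 2) MeasureTheory.volume a b :=
    (continuous_const.mul (hcv'.pow 2)).intervalIntegrable a b
  have key : ∀ t : ℝ,
      (∫ x in a..b, ((1 / 2) * (deriv (fun s => u s + t * v s) x) ^ 2
          - f x * (u x + t * v x)))
        = A + B * t + C * t ^ 2 := by
    intro t
    have h1 : (∫ x in a..b, ((1 / 2) * (deriv (fun s => u s + t * v s) x) ^ 2
          - f x * (u x + t * v x)))
        = ∫ x in a..b, (((1 / 2) * (deriv u x) ^ 2 - f x * u x)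
            + t * (deriv u x * deriv v x - f x * v x)
            + t ^ 2 * ((1 / 2) * (deriv v x) ^ 2)) := by
      apply intervalIntegral.integral_congr
      intro x _
      have hd : deriv (fun s => u s + t * v s) x = deriv u x + t * deriv v x :=
        ((hdu x).add ((hdv x).const_mul t)).deriv
      simp only [hd]
      ring
    rw [h1, intervalIntegral.integral_add (ip.add (iq.const_mul t)) (ir.const_mul (t ^ 2)),
      intervalIntegral.integral_add ip (iq.const_mul t),
      intervalIntegral.integral_const_mul, intervalIntegral.integral_const_mul]
    ring
  have hpoly : HasDerivAt (fun t : ℝ => A + B * t + C * t ^ 2) B 0 := by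
    have h := ((hasDerivAt_const (0 : ℝ) A).add
        ((hasDerivAt_id (0 : ℝ)).const_mul B)).add
        ((hasDerivAt_pow 2 (0 : ℝ)).const_mul C)
    simp at h
    exact h
  have hmain : HasDerivAt
      (fun t : ℝ => ∫ x in a..b,
        ((1 / 2) * (deriv (fun s => u s + t * v s) x) ^ 2
          - f x * (u x + t * v x))) B 0 :=
    hpoly.congr_of_eventuallyEq (Filter.Eventually.of_forall key)
  have hBval : B = ∫ x in a..b, (-(deriv (deriv u) x) - f x) * v x := by
    have ibp := intervalIntegral.integral_mul_deriv_eq_deriv_mul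
      (fun x _ => hdu' x) (fun x _ => hdv x)
      (hcu''.intervalIntegrable a b) (hcv'.intervalIntegrable a b)
    have i1 : IntervalIntegrable (fun x => deriv u x * deriv v x) MeasureTheory.volume a b :=
      (hcu'.mul hcv').intervalIntegrable a b
    have i2 : IntervalIntegrable (fun x => f x * v x) MeasureTheory.volume a b :=
      (hf.mul hcv).intervalIntegrable a b
    have i3 : IntervalIntegrable (fun x => deriv (deriv u) x * v x) MeasureTheory.volume a b :=
      (hcu''.mul hcv).intervalIntegrable a b
    have hrhs : (∫ x in a..b, (-(deriv (deriv u) x) - f x) * v x)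
        = -(∫ x in a..b, deriv (deriv u) x * v x) - ∫ x in a..b, f x * v x := by
      rw [show (fun x => (-(deriv (deriv u) x) - f x) * v x)
          = fun x => -(deriv (deriv u) x * v x) - f x * v x from funext fun x => by ring,
        intervalIntegral.integral_sub (show IntervalIntegrable (fun x => -(deriv (deriv u) x * v x)) MeasureTheory.volume a b from ((hcu''.mul hcv).neg).intervalIntegrable a b) i2,
        intervalIntegral.integral_neg]
    rw [hB, intervalIntegral.integral_sub i1 i2, ibp, hva, hvb, hrhs]
    ring
  rwa [hBval] at hmain
end
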